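/- Strong normalization of the target language: every well-typed closed target term M either steps in finitely many steps to a value or to matchfail; divergence is impossible. -/

import Mathlib

set_option linter.unusedVariables false

/-! ## Target language -/

inductive Tag | plus | plus1 | plus2
deriving DecidableEq

inductive TTy
| unit
| arr (T₁ T₂ : TTy)
| sum (φ : Tag) (T₁ T₂ : TTy)
deriving DecidableEq

inductive Tm
| var (n : Nat)
| unit
| lam (T : TTy) (b : Tm)
| app (f a : Tm)
| inj (i : Bool) (m : Tm)          -- inj true = inj₁, inj false = inj₂
| case2 (m b₁ b₂ : Tm)
| case1 (i : Bool) (m b : Tm)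
| cast (φ₁ φ₂ : Tag) (m : Tm)
| matchfail
deriving DecidableEq

namespace Tm

def shift (d c : Nat) : Tm → Tm
| var n => var (if n < c then n else n + d)
| unit => unit
| lam T b => lam T (shift d (c+1) b)
| app f a => app (shift d c f) (shift d c a)
| inj i m => inj i (shift d c m)
| case2 m b₁ b₂ => case2 (shift d c m) (shift d (c+1) b₁) (shift d (c+1) b₂)
| case1 i m b => case1 i (shift d c m) (shift d (c+1) b)
| cast φ₁ φ₂ m => cast φ₁ φ₂ (shift d c m)
| matchfail => matchfail

def subst : Tm → Nat → Tm → Tm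
| var n, k, s => if n = k then s else if k < n then var (n-1) else var n
| unit, _, _ => unit
| lam T b, k, s => lam T (subst b (k+1) (shift 1 0 s))
| app f a, k, s => app (subst f k s) (subst a k s)
| inj i m, k, s => inj i (subst m k s)
| case2 m b₁ b₂, k, s =>
    case2 (subst m k s) (subst b₁ (k+1) (shift 1 0 s)) (subst b₂ (k+1) (shift 1 0 s))
| case1 i m b, k, s => case1 i (subst m k s) (subst b (k+1) (shift 1 0 s))
| cast φ₁ φ₂ m, k, s => cast φ₁ φ₂ (subst m k s)
| matchfail, _, _ => matchfail

def subst0 (b s : Tm) : Tm := subst b 0 s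

/-- no cast subterm -/
def castFree : Tm → Prop
| var _ => True
| unit => True
| lam _ b => castFree b
| app f a => castFree f ∧ castFree a
| inj _ m => castFree m
| case2 m b₁ b₂ => castFree m ∧ castFree b₁ ∧ castFree b₂
| case1 _ m b => castFree m ∧ castFree b
| cast _ _ _ => False
| matchfail => True

/-- no matchfail subterm -/
def mfFree : Tm → Prop
| var _ => True
| unit => True
| lam _ b => mfFree b
| app f a => mfFree f ∧ mfFree a
| inj _ m => mfFree m
| case2 m b₁ b₂ => mfFree m ∧ mfFree b₁ ∧ mfFree b₂
| case1 _ m b => mfFree m ∧ mfFree b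
| cast _ _ m => mfFree m
| matchfail => False

end Tm

inductive Value : Tm → Prop
| unit : Value .unit
| lam : ∀ T b, Value (.lam T b)
| inj : ∀ i m, Value m → Value (.inj i m)

/-- the injection tag `i` is compatible with sum constructor `φ` -/
def tagOk (i : Bool) (φ : Tag) : Prop :=
  φ = Tag.plus ∨ φ = (if i then Tag.plus1 else Tag.plus2)

instance (i : Bool) (φ : Tag) : Decidable (tagOk i φ) := by
  unfold tagOk; infer_instance

/-! ### Target typing -/

inductive Typed : List TTy → Tm → TTy → Prop
| var : ∀ {Γ n T}, Γ[n]? = some T → Typed Γ (.var n) T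
| unit : ∀ {Γ}, Typed Γ .unit .unit
| lam : ∀ {Γ T₁ T₂ b}, Typed (T₁ :: Γ) b T₂ → Typed Γ (.lam T₁ b) (.arr T₁ T₂)
| app : ∀ {Γ f a T₁ T₂}, Typed Γ f (.arr T₁ T₂) → Typed Γ a T₁ → Typed Γ (.app f a) T₂
| inj : ∀ {Γ i m T₁ T₂ φ}, Typed Γ m (if i then T₁ else T₂) → tagOk i φ →
    Typed Γ (.inj i m) (.sum φ T₁ T₂)
| case2 : ∀ {Γ m b₁ b₂ φ T₁ T₂ T}, Typed Γ m (.sum φ T₁ T₂) →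
    Typed (T₁ :: Γ) b₁ T → Typed (T₂ :: Γ) b₂ T → Typed Γ (.case2 m b₁ b₂) T
| case1 : ∀ {Γ i m b T₁ T₂ T}, Typed Γ m (.sum (if i then Tag.plus1 else Tag.plus2) T₁ T₂) →
    Typed ((if i then T₁ else T₂) :: Γ) b T → Typed Γ (.case1 i m b) T
| cast : ∀ {Γ φ₁ φ₂ m T₁ T₂}, Typed Γ m (.sum φ₁ T₁ T₂) →
    Typed Γ (.cast φ₁ φ₂ m) (.sum φ₂ T₁ T₂)
| matchfail : ∀ {Γ T}, Typed Γ .matchfail T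

/-! ### Target operational semantics (call-by-value) -/

inductive Step : Tm → Tm → Prop
| beta : ∀ {T b v}, Value v → Step (.app (.lam T b) v) (b.subst0 v)
| app1 : ∀ {m m' n}, Step m m' → Step (.app m n) (.app m' n)
| app2 : ∀ {v n n'}, Value v → Step n n' → Step (.app v n) (.app v n')
| injC : ∀ {i m m'}, Step m m' → Step (.inj i m) (.inj i m')
| case2C : ∀ {m m' b₁ b₂}, Step m m' → Step (.case2 m b₁ b₂) (.case2 m' b₁ b₂)
| case1C : ∀ {i m m' b}, Step m m' → Step (.case1 i m b) (.case1 i m' b)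
| castC : ∀ {φ₁ φ₂ m m'}, Step m m' → Step (.cast φ₁ φ₂ m) (.cast φ₁ φ₂ m')
| case2R : ∀ {i v b₁ b₂}, Value v →
    Step (.case2 (.inj i v) b₁ b₂) ((if i then b₁ else b₂).subst0 v)
| case1R : ∀ {i v b}, Value v → Step (.case1 i (.inj i v) b) (b.subst0 v)
| castOk : ∀ {φ₁ φ₂ i v}, Value v → tagOk i φ₂ →
    Step (.cast φ₁ φ₂ (.inj i v)) (.inj i v)
| castFail : ∀ {φ₁ φ₂ i v}, Value v → ¬ tagOk i φ₂ →
    Step (.cast φ₁ φ₂ (.inj i v)) .matchfail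
| mfApp1 : ∀ {n}, Step (.app .matchfail n) .matchfail
| mfApp2 : ∀ {v}, Value v → Step (.app v .matchfail) .matchfail
| mfInj : ∀ {i}, Step (.inj i .matchfail) .matchfail
| mfCase2 : ∀ {b₁ b₂}, Step (.case2 .matchfail b₁ b₂) .matchfail
| mfCase1 : ∀ {i b}, Step (.case1 i .matchfail b) .matchfail
| mfCast : ∀ {φ₁ φ₂}, Step (.cast φ₁ φ₂ .matchfail) .matchfail

/-- multi-step evaluation -/
def Steps : Tm → Tm → Prop := Relation.ReflTransGen Step

def Converges (M : Tm) : Prop := ∃ W, Steps M W ∧ Value W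

/-! ### Cast classification and target precision -/

def SafeCast (φ₁ φ₂ : Tag) : Prop := φ₂ = Tag.plus
def BackCast (φ₁ φ₂ : Tag) : Prop :=
  φ₁ = Tag.plus ∧ (φ₂ = Tag.plus1 ∨ φ₂ = Tag.plus2)
def MatchCast (φ₁ φ₂ : Tag) : Prop :=
  (φ₁ = Tag.plus1 ∧ φ₂ = Tag.plus2) ∨ (φ₁ = Tag.plus2 ∧ φ₂ = Tag.plus1)

/-- precision between casts: `⟨φ₁' ⇒ φ₂'⟩ ⊑ ⟨φ₁ ⇒ φ₂⟩` -/
inductive CastPrec : Tag → Tag → Tag → Tag → Prop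
| refl : ∀ {φ₁ φ₂}, CastPrec φ₁ φ₂ φ₁ φ₂
| mcBc : ∀ {a b c d}, MatchCast a b → BackCast c d → CastPrec a b c d
| bcSc : ∀ {a b c d}, BackCast a b → SafeCast c d → CastPrec a b c d
| mcSc : ∀ {a b c d}, MatchCast a b → SafeCast c d → CastPrec a b c d
| scSc : ∀ {φ}, CastPrec Tag.plus Tag.plus φ Tag.plus

/-- target term precision `M' ⊑ M` -/
inductive TPrec : Tm → Tm → Prop
| var : ∀ {n}, TPrec (.var n) (.var n)
| unit : TPrec .unit .unit
| lam : ∀ {T' T b' b}, TPrec b' b → TPrec (.lam T' b') (.lam T b)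
| app : ∀ {f' f a' a}, TPrec f' f → TPrec a' a → TPrec (.app f' a') (.app f a)
| inj : ∀ {i m' m}, TPrec m' m → TPrec (.inj i m') (.inj i m)
| case2 : ∀ {m' m b₁' b₁ b₂' b₂}, TPrec m' m → TPrec b₁' b₁ → TPrec b₂' b₂ →
    TPrec (.case2 m' b₁' b₂') (.case2 m b₁ b₂)
| case1 : ∀ {i m' m b' b}, TPrec m' m → TPrec b' b →
    TPrec (.case1 i m' b') (.case1 i m b)
| case1case2 : ∀ {i m' m b' b₁ b₂}, TPrec m' m → TPrec b' (if i then b₁ else b₂) →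
    TPrec (.case1 i m' b') (.case2 m b₁ b₂)
| matchfail : ∀ {m}, TPrec .matchfail m
| cast : ∀ {φ₁' φ₂' φ₁ φ₂ m' m}, CastPrec φ₁' φ₂' φ₁ φ₂ → TPrec m' m →
    TPrec (.cast φ₁' φ₂' m') (.cast φ₁ φ₂ m)
| castL : ∀ {φ₁ φ₂ m' m}, TPrec m' m → TPrec (.cast φ₁ φ₂ m') m

/-! ## Source language -/

inductive SCons | plus | plus1 | plus2 | plusQ | plusQ1 | plusQ2
deriving DecidableEq

inductive STy
| unit
| arr (A B : STy)
| sum (s : SCons) (A B : STy)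
deriving DecidableEq

/-- translation of sum constructors -/
def SCons.trans : SCons → Tag
| .plus => .plus | .plusQ => .plus
| .plus1 => .plus1 | .plusQ1 => .plus1
| .plus2 => .plus2 | .plusQ2 => .plus2

/-- type translation ⟦·⟧ -/
def STy.trans : STy → TTy
| .unit => .unit
| .arr A B => .arr A.trans B.trans
| .sum s A B => .sum s.trans A.trans B.trans

inductive SExp
| var (n : Nat)
| unit
| lam (A : STy) (b : SExp)
| app (f a : SExp)
| inj (i : Bool) (e : SExp)
| case2 (e b₁ b₂ : SExp)
| case1 (i : Bool) (e b : SExp)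
| anno (e : SExp) (A : STy)
deriving DecidableEq

/-! ### Source precision (more static = more precise) -/

inductive SConsPrec : SCons → SCons → Prop
| refl : ∀ {s}, SConsPrec s s
| pQ : SConsPrec .plus .plusQ
| p1Q1 : SConsPrec .plus1 .plusQ1
| p2Q2 : SConsPrec .plus2 .plusQ2
| p1Q : SConsPrec .plus1 .plusQ
| p2Q : SConsPrec .plus2 .plusQ
| q1Q : SConsPrec .plusQ1 .plusQ
| q2Q : SConsPrec .plusQ2 .plusQ

inductive SPrec : STy → STy → Prop
| unit : SPrec .unit .unit
| arr : ∀ {A' A B' B}, SPrec A' A → SPrec B' B → SPrec (.arr A' B') (.arr A B)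
| sum : ∀ {s' s A' A B' B}, SConsPrec s' s → SPrec A' A → SPrec B' B →
    SPrec (.sum s' A' B') (.sum s A B)

inductive EPrec : SExp → SExp → Prop
| var : ∀ {n}, EPrec (.var n) (.var n)
| unit : EPrec .unit .unit
| lam : ∀ {A' A b' b}, SPrec A' A → EPrec b' b → EPrec (.lam A' b') (.lam A b)
| app : ∀ {f' f a' a}, EPrec f' f → EPrec a' a → EPrec (.app f' a') (.app f a)
| inj : ∀ {i e' e}, EPrec e' e → EPrec (.inj i e') (.inj i e)
| case2 : ∀ {e' e b₁' b₁ b₂' b₂}, EPrec e' e → EPrec b₁' b₁ → EPrec b₂' b₂ →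
    EPrec (.case2 e' b₁' b₂') (.case2 e b₁ b₂)
| case1 : ∀ {i e' e b' b}, EPrec e' e → EPrec b' b → EPrec (.case1 i e' b') (.case1 i e b)
| anno : ∀ {e' e A' A}, EPrec e' e → SPrec A' A → EPrec (.anno e' A') (.anno e A)

def CtxPrec (Γ' Γ : List STy) : Prop := List.Forall₂ SPrec Γ' Γ

/-! ### Directed consistency -/

inductive SConsDir : SCons → SCons → Prop
| refl : ∀ {s}, SConsDir s s
| toQ : ∀ {s}, SConsDir s .plusQ
| fromQ : ∀ {s}, SConsDir .plusQ s
| oneLs : SConsDir .plus1 .plus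
| oneRs : SConsDir .plus2 .plus
| oneLq : SConsDir .plusQ1 .plus
| oneRq : SConsDir .plusQ2 .plus
| q1p1 : SConsDir .plusQ1 .plus1
| p1q1 : SConsDir .plus1 .plusQ1
| q2p2 : SConsDir .plusQ2 .plus2
| p2q2 : SConsDir .plus2 .plusQ2

inductive DCons : STy → STy → Prop
| unit : DCons .unit .unit
| arr : ∀ {A₁ A₁' A₂ A₂'}, DCons A₁ A₁' → DCons A₂' A₂ →
    DCons (.arr A₁' A₂') (.arr A₁ A₂)
| sum : ∀ {s' s A₁' A₁ A₂' A₂}, SConsDir s' s → DCons A₁' A₁ → DCons A₂' A₂ →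
    DCons (.sum s' A₁' A₂') (.sum s A₁ A₂)

/-! ### Bidirectional typing -/

mutual
inductive Chk : List STy → SExp → STy → Prop
| unit : ∀ {Γ}, Chk Γ .unit .unit
| lam : ∀ {Γ A B b}, Chk (A :: Γ) b B → Chk Γ (.lam A b) (.arr A B)
| inj1 : ∀ {Γ e A₁ A₂}, Chk Γ e A₁ → Chk Γ (.inj true e) (.sum .plusQ1 A₁ A₂)
| inj2 : ∀ {Γ e A₁ A₂}, Chk Γ e A₂ → Chk Γ (.inj false e) (.sum .plusQ2 A₁ A₂)
| case2 : ∀ {Γ e b₁ b₂ s A₁ A₂ C}, Syn Γ e (.sum s A₁ A₂) →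
    Chk (A₁ :: Γ) b₁ C → Chk (A₂ :: Γ) b₂ C → Chk Γ (.case2 e b₁ b₂) C
| case1 : ∀ {Γ i e b s A₁ A₂ C}, Syn Γ e (.sum s A₁ A₂) →
    s = (if i then SCons.plus1 else SCons.plus2) →
    Chk ((if i then A₁ else A₂) :: Γ) b C → Chk Γ (.case1 i e b) C
| sub : ∀ {Γ e A B}, Syn Γ e A → DCons A B → Chk Γ e B

inductive Syn : List STy → SExp → STy → Prop
| var : ∀ {Γ n A}, Γ[n]? = some A → Syn Γ (.var n) A
| anno : ∀ {Γ e A}, Chk Γ e A → Syn Γ (.anno e A) A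
| app : ∀ {Γ f a A B}, Syn Γ f (.arr A B) → Chk Γ a A → Syn Γ (.app f a) B
end

/-! ### Type assignment -/

inductive SAssign : List STy → SExp → STy → Prop
| var : ∀ {Γ n A}, Γ[n]? = some A → SAssign Γ (.var n) A
| unit : ∀ {Γ}, SAssign Γ .unit .unit
| lam : ∀ {Γ A B b}, SAssign (A :: Γ) b B → SAssign Γ (.lam A b) (.arr A B)
| app : ∀ {Γ f a A B}, SAssign Γ f (.arr A B) → SAssign Γ a A → SAssign Γ (.app f a) B
| inj1 : ∀ {Γ e A₁ A₂}, SAssign Γ e A₁ → SAssign Γ (.inj true e) (.sum .plusQ1 A₁ A₂)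
| inj2 : ∀ {Γ e A₁ A₂}, SAssign Γ e A₂ → SAssign Γ (.inj false e) (.sum .plusQ2 A₁ A₂)
| case2 : ∀ {Γ e b₁ b₂ s A₁ A₂ C}, SAssign Γ e (.sum s A₁ A₂) →
    SAssign (A₁ :: Γ) b₁ C → SAssign (A₂ :: Γ) b₂ C → SAssign Γ (.case2 e b₁ b₂) C
| case1 : ∀ {Γ i e b s A₁ A₂ C}, SAssign Γ e (.sum s A₁ A₂) →
    s = (if i then SCons.plus1 else SCons.plus2) →
    SAssign ((if i then A₁ else A₂) :: Γ) b C → SAssign Γ (.case1 i e b) C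
| anno : ∀ {Γ e A}, SAssign Γ e A → SAssign Γ (.anno e A) A
| sub : ∀ {Γ e A B}, SAssign Γ e A → DCons A B → SAssign Γ e B

/-! ### Coercion generation -/

inductive Coerce : STy → STy → (Tm → Tm) → Prop
| unit : Coerce .unit .unit id
| arr : ∀ {A₁ A₁' A₂ A₂' C₁ C₂}, Coerce A₁ A₁' C₁ → Coerce A₂' A₂ C₂ →
    Coerce (.arr A₁' A₂') (.arr A₁ A₂)
      (fun M => .lam A₁.trans (C₂ (.app (M.shift 1 0) (C₁ (.var 0)))))
| oneL : ∀ {s' s A₁' A₁ A₂' A₂ C₁}, (s' = .plus1 ∨ s' = .plusQ1) → SConsDir s' s →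
    Coerce A₁' A₁ C₁ →
    Coerce (.sum s' A₁' A₂') (.sum s A₁ A₂)
      (fun M => .cast s'.trans s.trans (.case1 true M (.inj true (C₁ (.var 0)))))
| oneR : ∀ {s' s A₁' A₁ A₂' A₂ C₂}, (s' = .plus2 ∨ s' = .plusQ2) → SConsDir s' s →
    Coerce A₂' A₂ C₂ →
    Coerce (.sum s' A₁' A₂') (.sum s A₁ A₂)
      (fun M => .cast s'.trans s.trans (.case1 false M (.inj false (C₂ (.var 0)))))
| two : ∀ {s' s A₁' A₁ A₂' A₂ C₁ C₂}, (s' = .plus ∨ s' = .plusQ) → SConsDir s' s →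
    Coerce A₁' A₁ C₁ → Coerce A₂' A₂ C₂ →
    Coerce (.sum s' A₁' A₂') (.sum s A₁ A₂)
      (fun M => .cast s'.trans s.trans
        (.case2 M (.cast .plus1 s'.trans (.inj true (C₁ (.var 0))))
                  (.cast .plus2 s'.trans (.inj false (C₂ (.var 0))))))

/-! ### Type-directed translation -/

inductive Translate : List STy → SExp → STy → Tm → Prop
| var : ∀ {Γ n A}, Γ[n]? = some A → Translate Γ (.var n) A (.var n)
| unit : ∀ {Γ}, Translate Γ .unit .unit .unit
| lam : ∀ {Γ A B b M}, Translate (A :: Γ) b B M → Translate Γ (.lam A b) (.arr A B) (.lam A.trans M)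
| app : ∀ {Γ f a A B Mf Ma}, Translate Γ f (.arr A B) Mf → Translate Γ a A Ma →
    Translate Γ (.app f a) B (.app Mf Ma)
| inj1 : ∀ {Γ e A₁ A₂ M}, Translate Γ e A₁ M →
    Translate Γ (.inj true e) (.sum .plusQ1 A₁ A₂) (.inj true M)
| inj2 : ∀ {Γ e A₁ A₂ M}, Translate Γ e A₂ M →
    Translate Γ (.inj false e) (.sum .plusQ2 A₁ A₂) (.inj false M)
| case2 : ∀ {Γ e b₁ b₂ s A₁ A₂ C Me M₁ M₂}, Translate Γ e (.sum s A₁ A₂) Me →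
    Translate (A₁ :: Γ) b₁ C M₁ → Translate (A₂ :: Γ) b₂ C M₂ →
    Translate Γ (.case2 e b₁ b₂) C (.case2 Me M₁ M₂)
| case1 : ∀ {Γ i e b s A₁ A₂ C Me Mb}, Translate Γ e (.sum s A₁ A₂) Me →
    s = (if i then SCons.plus1 else SCons.plus2) →
    Translate ((if i then A₁ else A₂) :: Γ) b C Mb →
    Translate Γ (.case1 i e b) C (.case1 i Me Mb)
| anno : ∀ {Γ e A M}, Translate Γ e A M → Translate Γ (.anno e A) A M
| sub : ∀ {Γ e A B M C}, Translate Γ e A M → DCons A B → Coerce A B C → Translate Γ e B (C M)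

/-! ### Static source programs -/

def SCons.isStatic : SCons → Prop := (· = SCons.plus)

def STy.isStatic : STy → Prop
| .unit => True
| .arr A B => A.isStatic ∧ B.isStatic
| .sum s A B => s.isStatic ∧ A.isStatic ∧ B.isStatic

def SExp.isStatic : SExp → Prop
| .var _ => True
| .unit => True
| .lam A b => A.isStatic ∧ b.isStatic
| .app f a => f.isStatic ∧ a.isStatic
| .inj _ e => e.isStatic
| .case2 e b₁ b₂ => e.isStatic ∧ b₁.isStatic ∧ b₂.isStatic
| .case1 _ e b => e.isStatic ∧ b.isStatic
| .anno e A => e.isStatic ∧ A.isStatic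

def staticCtx (Γ : List STy) : Prop := ∀ A ∈ Γ, A.isStatic

namespace SN
open Tm

/-- all free variables < k -/
def ClosedN : Nat → Tm → Prop
| k, .var n => n < k
| _, .unit => True
| k, .lam _ b => ClosedN (k+1) b
| k, .app f a => ClosedN k f ∧ ClosedN k a
| k, .inj _ m => ClosedN k m
| k, .case2 m b₁ b₂ => ClosedN k m ∧ ClosedN (k+1) b₁ ∧ ClosedN (k+1) b₂
| k, .case1 _ m b => ClosedN k m ∧ ClosedN (k+1) b
| k, .cast _ _ m => ClosedN k m
| _, .matchfail => True

lemma closedN_mono : ∀ (M : Tm) {k k'}, k ≤ k' → ClosedN k M → ClosedN k' M := by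
  intro M
  induction M with
  | var n =>
    intro k k' h hc
    exact lt_of_lt_of_le hc h
  | unit =>
    intro _ _ _ _; trivial
  | lam T b ih =>
    intro k k' h hc
    exact ih (by omega) hc
  | app f a ihf iha =>
    intro k k' h hc
    exact ⟨ihf h hc.1, iha h hc.2⟩
  | inj i m ih =>
    intro k k' h hc
    exact ih h hc
  | case2 m b₁ b₂ ihm ih1 ih2 =>
    intro k k' h hc
    exact ⟨ihm h hc.1, ih1 (by omega) hc.2.1, ih2 (by omega) hc.2.2⟩
  | case1 i m b ihm ihb =>
    intro k k' h hc
    exact ⟨ihm h hc.1, ihb (by omega) hc.2⟩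
  | cast φ₁ φ₂ m ih =>
    intro k k' h hc
    exact ih h hc
  | matchfail =>
    intro _ _ _ _; trivial

lemma shift_closed : ∀ (M : Tm) {d c}, ClosedN c M → M.shift d c = M := by
  intro M
  induction M with
  | var n =>
    intro d c hc
    have hn : n < c := hc
    simp only [Tm.shift]
    rw [if_pos hn]
  | unit =>
    intro _ _ _; rfl
  | lam T b ih =>
    intro d c hc
    simp only [Tm.shift]
    rw [ih hc]
  | app f a ihf iha =>
    intro d c hc
    simp only [Tm.shift]
    rw [ihf hc.1, iha hc.2]
  | inj i m ih =>
    intro d c hc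
    simp only [Tm.shift]
    rw [ih hc]
  | case2 m b₁ b₂ ihm ih1 ih2 =>
    intro d c hc
    simp only [Tm.shift]
    rw [ihm hc.1, ih1 hc.2.1, ih2 hc.2.2]
  | case1 i m b ihm ihb =>
    intro d c hc
    simp only [Tm.shift]
    rw [ihm hc.1, ihb hc.2]
  | cast φ₁ φ₂ m ih =>
    intro d c hc
    simp only [Tm.shift]
    rw [ih hc]
  | matchfail =>
    intro _ _ _; rfl

lemma subst_closed : ∀ (M : Tm) {k j s}, k ≤ j → ClosedN k M → M.subst j s = M := by
  intro M
  induction M with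
  | var n =>
    intro k j s h hc
    have hn : n < k := hc
    simp only [Tm.subst]
    rw [if_neg (by omega), if_neg (by omega)]
  | unit =>
    intro _ _ _ _ _; rfl
  | lam T b ih =>
    intro k j s h hc
    simp only [Tm.subst]
    rw [ih (k := k+1) (by omega) hc]
  | app f a ihf iha =>
    intro k j s h hc
    simp only [Tm.subst]
    rw [ihf h hc.1, iha h hc.2]
  | inj i m ih =>
    intro k j s h hc
    simp only [Tm.subst]
    rw [ih h hc]
  | case2 m b₁ b₂ ihm ih1 ih2 =>
    intro k j s h hc
    simp only [Tm.subst]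
    rw [ihm h hc.1, ih1 (k := k+1) (by omega) hc.2.1, ih2 (k := k+1) (by omega) hc.2.2]
  | case1 i m b ihm ihb =>
    intro k j s h hc
    simp only [Tm.subst]
    rw [ihm h hc.1, ihb (k := k+1) (by omega) hc.2]
  | cast φ₁ φ₂ m ih =>
    intro k j s h hc
    simp only [Tm.subst]
    rw [ih h hc]
  | matchfail =>
    intro _ _ _ _ _; rfl

lemma closedN_subst : ∀ (M : Tm) {k j v}, ClosedN 0 v → k ≤ j → ClosedN (j+1) M →
    ClosedN j (M.subst k v) := by
  intro M
  induction M with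
  | var n =>
    intro k j v hv h hc
    have hn : n < j + 1 := hc
    simp only [Tm.subst]
    by_cases h1 : n = k
    · rw [if_pos h1]
      exact closedN_mono v (Nat.zero_le _) hv
    · rw [if_neg h1]
      by_cases h2 : k < n
      · rw [if_pos h2]
        show n - 1 < j
        omega
      · rw [if_neg h2]
        show n < j
        omega
  | unit =>
    intro _ _ _ _ _ _; trivial
  | lam T b ih =>
    intro k j v hv h hc
    simp only [Tm.subst]
    show ClosedN (j+1) (Tm.subst b (k+1) (Tm.shift 1 0 v))
    rw [shift_closed v hv]
    exact ih hv (by omega) hc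
  | app f a ihf iha =>
    intro k j v hv h hc
    exact ⟨ihf hv h hc.1, iha hv h hc.2⟩
  | inj i m ih =>
    intro k j v hv h hc
    exact ih hv h hc
  | case2 m b₁ b₂ ihm ih1 ih2 =>
    intro k j v hv h hc
    refine ⟨ihm hv h hc.1, ?_, ?_⟩
    · show ClosedN (j+1) (Tm.subst b₁ (k+1) (Tm.shift 1 0 v))
      rw [shift_closed v hv]
      exact ih1 hv (by omega) hc.2.1
    · show ClosedN (j+1) (Tm.subst b₂ (k+1) (Tm.shift 1 0 v))
      rw [shift_closed v hv]
      exact ih2 hv (by omega) hc.2.2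
  | case1 i m b ihm ihb =>
    intro k j v hv h hc
    refine ⟨ihm hv h hc.1, ?_⟩
    show ClosedN (j+1) (Tm.subst b (k+1) (Tm.shift 1 0 v))
    rw [shift_closed v hv]
    exact ihb hv (by omega) hc.2
  | cast φ₁ φ₂ m ih =>
    intro k j v hv h hc
    exact ih hv h hc
  | matchfail =>
    intro _ _ _ _ _ _; trivial

lemma step_closed {M M'} (h : Step M M') : ClosedN 0 M → ClosedN 0 M' := by
  induction h with
  | beta hv =>
    intro hc
    exact closedN_subst _ hc.2 (Nat.le_refl _) hc.1
  | app1 _ ih =>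
    intro hc; exact ⟨ih hc.1, hc.2⟩
  | app2 _ _ ih =>
    intro hc; exact ⟨hc.1, ih hc.2⟩
  | injC _ ih =>
    intro hc; exact ih hc
  | case2C _ ih =>
    intro hc; exact ⟨ih hc.1, hc.2⟩
  | case1C _ ih =>
    intro hc; exact ⟨ih hc.1, hc.2⟩
  | castC _ ih =>
    intro hc; exact ih hc
  | case2R hv =>
    rename_i i v b₁ b₂
    intro hc
    cases i
    · exact closedN_subst _ hc.1 (Nat.le_refl _) hc.2.2
    · exact closedN_subst _ hc.1 (Nat.le_refl _) hc.2.1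
  | case1R hv =>
    intro hc
    exact closedN_subst _ hc.1 (Nat.le_refl _) hc.2
  | castOk _ _ =>
    intro hc; exact hc
  | castFail _ _ =>
    intro _; trivial
  | mfApp1 =>
    intro _; trivial
  | mfApp2 _ =>
    intro _; trivial
  | mfInj =>
    intro _; trivial
  | mfCase2 =>
    intro _; trivial
  | mfCase1 =>
    intro _; trivial
  | mfCast =>
    intro _; trivial

lemma steps_closed {M M'} (h : Steps M M') : ClosedN 0 M → ClosedN 0 M' := by
  induction h with
  | refl => exact id
  | tail _ hstep ih =>
    intro hc
    exact step_closed hstep (ih hc)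

lemma typed_closed : ∀ {Γ M T}, Typed Γ M T → ClosedN Γ.length M := by
  intro Γ M T h
  induction h with
  | var hget =>
    rename_i Γ n T
    show n < Γ.length
    exact List.getElem?_eq_some_iff.mp hget |>.choose
  | unit => trivial
  | lam _ ih => exact ih
  | app _ _ ihf iha => exact ⟨ihf, iha⟩
  | inj _ _ ih => exact ih
  | case2 _ _ _ ihm ih1 ih2 => exact ⟨ihm, ih1, ih2⟩
  | case1 _ _ ihm ihb => exact ⟨ihm, ihb⟩
  | cast _ ih => exact ih
  | matchfail => trivial

lemma subst_var_eq {n k : Nat} (s : Tm) (h : n = k) : (Tm.var n).subst k s = s := by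
  simp only [Tm.subst]
  rw [if_pos h]

lemma subst_var_gt {n k : Nat} (s : Tm) (h : k < n) : (Tm.var n).subst k s = Tm.var (n-1) := by
  simp only [Tm.subst]
  rw [if_neg (by omega), if_pos h]

lemma subst_var_lt {n k : Nat} (s : Tm) (h : n < k) : (Tm.var n).subst k s = Tm.var n := by
  simp only [Tm.subst]
  rw [if_neg (by omega), if_neg (by omega)]

/-- key substitution swap lemma for closed substituends -/
lemma subst_swap : ∀ (M : Tm) {j k} (a v : Tm), ClosedN 0 a → ClosedN 0 v → j ≤ k →
    (M.subst (k+1) v).subst j a = (M.subst j a).subst k v := by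
  intro M
  induction M with
  | var n =>
    intro j k a v ha hv hjk
    rcases Nat.lt_trichotomy n j with h | h | h
    · conv_lhs => rw [subst_var_lt v (by omega), subst_var_lt a (by omega)]
      conv_rhs => rw [subst_var_lt a (by omega), subst_var_lt v (by omega)]
    · subst h
      conv_lhs => rw [subst_var_lt v (by omega), subst_var_eq a rfl]
      conv_rhs => rw [subst_var_eq a rfl, subst_closed a (Nat.zero_le _) ha]
    · by_cases h1 : n = k+1
      · subst h1
        conv_lhs => rw [subst_var_eq v rfl, subst_closed v (Nat.zero_le _) hv]
        conv_rhs => rw [subst_var_gt a (by omega), Nat.add_sub_cancel, subst_var_eq v rfl]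
      · by_cases h2 : k+1 < n
        · conv_lhs => rw [subst_var_gt v (by omega), subst_var_gt a (by omega)]
          conv_rhs => rw [subst_var_gt a (by omega), subst_var_gt v (by omega)]
        · conv_lhs => rw [subst_var_lt v (by omega), subst_var_gt a (by omega)]
          conv_rhs => rw [subst_var_gt a (by omega), subst_var_lt v (by omega)]
  | unit =>
    intro _ _ _ _ _ _ _; rfl
  | lam T b ih =>
    intro j k a v ha hv hjk
    simp only [Tm.subst]
    rw [shift_closed a ha, shift_closed v hv, ih a v ha hv (by omega)]
  | app f g ihf ihg =>
    intro j k a v ha hv hjk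
    simp only [Tm.subst]
    rw [ihf a v ha hv hjk, ihg a v ha hv hjk]
  | inj i m ih =>
    intro j k a v ha hv hjk
    simp only [Tm.subst]
    rw [ih a v ha hv hjk]
  | case2 m b₁ b₂ ihm ih1 ih2 =>
    intro j k a v ha hv hjk
    simp only [Tm.subst]
    rw [shift_closed a ha, shift_closed v hv,
      ihm a v ha hv hjk, ih1 a v ha hv (by omega), ih2 a v ha hv (by omega)]
  | case1 i m b ihm ihb =>
    intro j k a v ha hv hjk
    simp only [Tm.subst]
    rw [shift_closed a ha, shift_closed v hv,
      ihm a v ha hv hjk, ihb a v ha hv (by omega)]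
  | cast φ₁ φ₂ m ih =>
    intro j k a v ha hv hjk
    simp only [Tm.subst]
    rw [ih a v ha hv hjk]
  | matchfail =>
    intro _ _ _ _ _ _ _; rfl

end SN
namespace SN
open Tm

/-- simultaneous substitution of a list of closed values, starting at index k -/
def msubstAt (k : Nat) : List Tm → Tm → Tm
| [], M => M
| v :: γ, M => msubstAt k γ (M.subst k v)

def msubst (γ : List Tm) (M : Tm) : Tm := msubstAt 0 γ M

def ClosedEnv (γ : List Tm) : Prop := ∀ v ∈ γ, ClosedN 0 v

lemma ClosedEnv.tail {v γ} (h : ClosedEnv (v :: γ)) : ClosedEnv γ :=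
  fun w hw => h w (List.mem_cons_of_mem _ hw)

lemma ClosedEnv.head {v γ} (h : ClosedEnv (v :: γ)) : ClosedN 0 v :=
  h v List.mem_cons_self

lemma msubstAt_closed_id : ∀ (γ : List Tm) {k M}, ClosedN k M → msubstAt k γ M = M := by
  intro γ
  induction γ with
  | nil => intro k M h; rfl
  | cons v γ ih =>
    intro k M h
    show msubstAt k γ (M.subst k v) = M
    rw [subst_closed M (Nat.le_refl _) h]
    exact ih h

lemma msubstAt_unit (k γ) : msubstAt k γ .unit = .unit := msubstAt_closed_id γ trivial

lemma msubstAt_matchfail (k γ) : msubstAt k γ .matchfail = .matchfail :=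
  msubstAt_closed_id γ trivial

lemma msubstAt_app : ∀ (γ : List Tm) {k f a},
    msubstAt k γ (.app f a) = .app (msubstAt k γ f) (msubstAt k γ a) := by
  intro γ
  induction γ with
  | nil => intro _ _ _; rfl
  | cons v γ ih =>
    intro k f a
    show msubstAt k γ ((Tm.app f a).subst k v) = _
    simp only [Tm.subst]
    exact ih

lemma msubstAt_inj : ∀ (γ : List Tm) {k i m},
    msubstAt k γ (.inj i m) = .inj i (msubstAt k γ m) := by
  intro γ
  induction γ with
  | nil => intro _ _ _; rfl
  | cons v γ ih =>
    intro k i m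
    show msubstAt k γ ((Tm.inj i m).subst k v) = _
    simp only [Tm.subst]
    exact ih

lemma msubstAt_cast : ∀ (γ : List Tm) {k φ₁ φ₂ m},
    msubstAt k γ (.cast φ₁ φ₂ m) = .cast φ₁ φ₂ (msubstAt k γ m) := by
  intro γ
  induction γ with
  | nil => intro _ _ _ _; rfl
  | cons v γ ih =>
    intro k φ₁ φ₂ m
    show msubstAt k γ ((Tm.cast φ₁ φ₂ m).subst k v) = _
    simp only [Tm.subst]
    exact ih

lemma msubstAt_lam : ∀ (γ : List Tm) {k T b}, ClosedEnv γ →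
    msubstAt k γ (.lam T b) = .lam T (msubstAt (k+1) γ b) := by
  intro γ
  induction γ with
  | nil => intro _ _ _ _; rfl
  | cons v γ ih =>
    intro k T b hγ
    show msubstAt k γ ((Tm.lam T b).subst k v) = _
    simp only [Tm.subst]
    rw [shift_closed v hγ.head]
    exact ih hγ.tail

lemma msubstAt_case2 : ∀ (γ : List Tm) {k m b₁ b₂}, ClosedEnv γ →
    msubstAt k γ (.case2 m b₁ b₂) =
      .case2 (msubstAt k γ m) (msubstAt (k+1) γ b₁) (msubstAt (k+1) γ b₂) := by
  intro γ
  induction γ with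
  | nil => intro _ _ _ _ _; rfl
  | cons v γ ih =>
    intro k m b₁ b₂ hγ
    show msubstAt k γ ((Tm.case2 m b₁ b₂).subst k v) = _
    simp only [Tm.subst]
    rw [shift_closed v hγ.head]
    exact ih hγ.tail

lemma msubstAt_case1 : ∀ (γ : List Tm) {k i m b}, ClosedEnv γ →
    msubstAt k γ (.case1 i m b) = .case1 i (msubstAt k γ m) (msubstAt (k+1) γ b) := by
  intro γ
  induction γ with
  | nil => intro _ _ _ _ _; rfl
  | cons v γ ih =>
    intro k i m b hγ
    show msubstAt k γ ((Tm.case1 i m b).subst k v) = _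
    simp only [Tm.subst]
    rw [shift_closed v hγ.head]
    exact ih hγ.tail

lemma subst_msubstAt : ∀ (γ : List Tm) {k M a}, ClosedN 0 a → ClosedEnv γ →
    (msubstAt (k+1) γ M).subst k a = msubstAt k γ (M.subst k a) := by
  intro γ
  induction γ with
  | nil => intro _ _ _ _ _; rfl
  | cons v γ ih =>
    intro k M a ha hγ
    show (msubstAt (k+1) γ (M.subst (k+1) v)).subst k a = msubstAt k γ ((M.subst k a).subst k v)
    rw [ih ha hγ.tail, subst_swap M a v ha hγ.head (Nat.le_refl _)]

lemma msubst_cons {v γ M} (ha : ClosedN 0 v) (hγ : ClosedEnv γ) :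
    (msubstAt 1 γ M).subst0 v = msubst (v :: γ) M := by
  show (msubstAt 1 γ M).subst 0 v = msubstAt 0 γ (M.subst 0 v)
  exact subst_msubstAt γ ha hγ

lemma msubstAt_closed : ∀ (γ : List Tm) {k M}, ClosedEnv γ →
    ClosedN (k + γ.length) M → ClosedN k (msubstAt k γ M) := by
  intro γ
  induction γ with
  | nil => intro k M _ h; exact h
  | cons v γ ih =>
    intro k M hγ h
    show ClosedN k (msubstAt k γ (M.subst k v))
    refine ih hγ.tail ?_
    refine closedN_subst M hγ.head (by omega) ?_
    exact closedN_mono M (by simp; omega) h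

/-! ### steps machinery -/

lemma steps_lift {f : Tm → Tm} (hf : ∀ {a b}, Step a b → Step (f a) (f b))
    {M N : Tm} (h : Steps M N) : Steps (f M) (f N) :=
  Relation.ReflTransGen.lift f (fun _ _ s => hf s) _ _ h

lemma steps_app1 {m m' n} (h : Steps m m') : Steps (.app m n) (.app m' n) :=
  steps_lift (fun s => Step.app1 s) h

lemma steps_app2 {v n n'} (hv : Value v) (h : Steps n n') : Steps (.app v n) (.app v n') :=
  steps_lift (fun s => Step.app2 hv s) h

lemma steps_injC {i m m'} (h : Steps m m') : Steps (.inj i m) (.inj i m') :=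
  steps_lift (fun s => Step.injC s) h

lemma steps_case2C {m m' b₁ b₂} (h : Steps m m') : Steps (.case2 m b₁ b₂) (.case2 m' b₁ b₂) :=
  steps_lift (fun s => Step.case2C s) h

lemma steps_case1C {i m m' b} (h : Steps m m') : Steps (.case1 i m b) (.case1 i m' b) :=
  steps_lift (fun s => Step.case1C s) h

lemma steps_castC {φ₁ φ₂ m m'} (h : Steps m m') : Steps (.cast φ₁ φ₂ m) (.cast φ₁ φ₂ m') :=
  steps_lift (fun s => Step.castC s) h

/-! ### the logical relation -/

/-- goodness of (closed) values at a type -/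
def Good : TTy → Tm → Prop
| .unit, v => v = .unit
| .arr T₁ T₂, v => ∃ T b, v = .lam T b ∧ ∀ a, Value a → ClosedN 0 a → Good T₁ a →
    ((∃ W, Steps (b.subst0 a) W ∧ Value W ∧ Good T₂ W) ∨ Steps (b.subst0 a) .matchfail)
| .sum φ T₁ T₂, v =>
    (∃ m, v = .inj true m ∧ Value m ∧ tagOk true φ ∧ Good T₁ m) ∨
    (∃ m, v = .inj false m ∧ Value m ∧ tagOk false φ ∧ Good T₂ m)

/-- goodness of (closed) terms at a type -/
def ExpGood (T : TTy) (M : Tm) : Prop :=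
  (∃ W, Steps M W ∧ Value W ∧ Good T W) ∨ Steps M .matchfail

lemma ExpGood.of_value {T v} (hv : Value v) (hg : Good T v) : ExpGood T v :=
  Or.inl ⟨v, Relation.ReflTransGen.refl, hv, hg⟩

lemma ExpGood.steps {T M N} (h : Steps M N) (hN : ExpGood T N) : ExpGood T M := by
  rcases hN with ⟨W, hs, hv, hg⟩ | hmf
  · exact Or.inl ⟨W, Relation.ReflTransGen.trans h hs, hv, hg⟩
  · exact Or.inr (Relation.ReflTransGen.trans h hmf)

def GEnv : List Tm → List TTy → Prop :=
  List.Forall₂ (fun v T => Value v ∧ ClosedN 0 v ∧ Good T v)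

lemma GEnv.closedEnv {γ Γ} (h : GEnv γ Γ) : ClosedEnv γ := by
  induction h with
  | nil => intro v hv; simp at hv
  | cons hp _ ih =>
    intro w hw
    rcases List.mem_cons.mp hw with rfl | hw
    · exact hp.2.1
    · exact ih w hw

lemma genv_lookup : ∀ {γ Γ}, GEnv γ Γ → ∀ {n T}, Γ[n]? = some T →
    ∃ v, Value v ∧ ClosedN 0 v ∧ Good T v ∧ msubst γ (.var n) = v := by
  intro γ Γ h
  induction h with
  | nil =>
    intro n T hget
    simp at hget
  | cons hp htail ih =>
    rename_i v T' γ' Γ'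
    intro n T hget
    cases n with
    | zero =>
      simp at hget
      subst hget
      refine ⟨v, hp.1, hp.2.1, hp.2.2, ?_⟩
      show msubstAt 0 γ' ((Tm.var 0).subst 0 v) = v
      rw [subst_var_eq v rfl]
      exact msubstAt_closed_id γ' hp.2.1
    | succ n =>
      rw [List.getElem?_cons_succ] at hget
      obtain ⟨w, hw, hcw, hgw, heq⟩ := ih hget
      refine ⟨w, hw, hcw, hgw, ?_⟩
      show msubstAt 0 γ' ((Tm.var (n+1)).subst 0 v) = w
      rw [subst_var_gt v (by omega)]
      exact heq

end SN
namespace SN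
open Tm

lemma msubst_unit {γ} : msubst γ .unit = .unit := msubstAt_unit 0 γ
lemma msubst_matchfail {γ} : msubst γ .matchfail = .matchfail := msubstAt_matchfail 0 γ
lemma msubst_app {γ f a} : msubst γ (.app f a) = .app (msubst γ f) (msubst γ a) :=
  msubstAt_app γ
lemma msubst_inj {γ i m} : msubst γ (.inj i m) = .inj i (msubst γ m) := msubstAt_inj γ
lemma msubst_cast {γ φ₁ φ₂ m} : msubst γ (.cast φ₁ φ₂ m) = .cast φ₁ φ₂ (msubst γ m) :=
  msubstAt_cast γ
lemma msubst_lam {γ T b} (h : ClosedEnv γ) :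
    msubst γ (.lam T b) = .lam T (msubstAt 1 γ b) := msubstAt_lam γ h
lemma msubst_case2 {γ m b₁ b₂} (h : ClosedEnv γ) :
    msubst γ (.case2 m b₁ b₂) =
      .case2 (msubst γ m) (msubstAt 1 γ b₁) (msubstAt 1 γ b₂) := msubstAt_case2 γ h
lemma msubst_case1 {γ i m b} (h : ClosedEnv γ) :
    msubst γ (.case1 i m b) = .case1 i (msubst γ m) (msubstAt 1 γ b) := msubstAt_case1 γ h

lemma genv_msubst_closed {γ Γ M T} (henv : GEnv γ Γ) (ht : Typed Γ M T) :
    ClosedN 0 (msubst γ M) := by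
  refine msubstAt_closed γ henv.closedEnv ?_
  have hlen : γ.length = Γ.length := List.Forall₂.length_eq henv
  rw [Nat.zero_add, hlen]
  exact typed_closed ht

/-- the fundamental lemma -/
theorem fund : ∀ {Γ M T}, Typed Γ M T → ∀ γ, GEnv γ Γ → ExpGood T (msubst γ M) := by
  intro Γ M T h
  induction h with
  | var hget =>
    intro γ henv
    obtain ⟨v, hv, hcv, hgv, heq⟩ := genv_lookup henv hget
    rw [heq]
    exact ExpGood.of_value hv hgv
  | unit =>
    intro γ henv
    rw [msubst_unit]
    exact ExpGood.of_value Value.unit rfl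
  | lam hb ih =>
    rename_i Γ T₁ T₂ b
    intro γ henv
    rw [msubst_lam henv.closedEnv]
    refine ExpGood.of_value (Value.lam _ _) ?_
    refine ⟨T₁, msubstAt 1 γ b, rfl, ?_⟩
    intro a hav hac hag
    rw [msubst_cons hac henv.closedEnv]
    exact ih (a :: γ) (List.Forall₂.cons ⟨hav, hac, hag⟩ henv)
  | app hf ha ihf iha =>
    rename_i Γ f a T₁ T₂
    intro γ henv
    rw [msubst_app]
    rcases ihf γ henv with ⟨W, hsW, hvW, hgW⟩ | hmf
    · obtain ⟨Tb, b, rfl, hbody⟩ := hgW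
      rcases iha γ henv with ⟨Wa, hsa, hva, hga⟩ | hmfa
      · have hcwa : ClosedN 0 Wa := steps_closed hsa (genv_msubst_closed henv ha)
        refine ExpGood.steps ?_ (hbody Wa hva hcwa hga)
        refine Relation.ReflTransGen.trans (steps_app1 hsW) ?_
        refine Relation.ReflTransGen.trans (steps_app2 (Value.lam _ _) hsa) ?_
        exact Relation.ReflTransGen.single (Step.beta hva)
      · refine Or.inr ?_
        refine Relation.ReflTransGen.trans (steps_app1 hsW) ?_
        refine Relation.ReflTransGen.trans (steps_app2 (Value.lam _ _) hmfa) ?_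
        exact Relation.ReflTransGen.single (Step.mfApp2 (Value.lam _ _))
    · exact Or.inr (Relation.ReflTransGen.trans (steps_app1 hmf)
        (Relation.ReflTransGen.single Step.mfApp1))
  | inj hm htag ihm =>
    rename_i Γ i m T₁ T₂ φ
    intro γ henv
    rw [msubst_inj]
    rcases ihm γ henv with ⟨W, hs, hv, hg⟩ | hmf
    · refine ExpGood.steps (steps_injC hs) (ExpGood.of_value (Value.inj _ _ hv) ?_)
      cases i
      · exact Or.inr ⟨W, rfl, hv, htag, hg⟩
      · exact Or.inl ⟨W, rfl, hv, htag, hg⟩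
    · exact Or.inr (Relation.ReflTransGen.trans (steps_injC hmf)
        (Relation.ReflTransGen.single Step.mfInj))
  | case2 hm hb1 hb2 ihm ih1 ih2 =>
    rename_i Γ m b₁ b₂ φ T₁ T₂ T
    intro γ henv
    rw [msubst_case2 henv.closedEnv]
    rcases ihm γ henv with ⟨W, hs, hv, hg⟩ | hmf
    · have hclW : ClosedN 0 W := steps_closed hs (genv_msubst_closed henv hm)
      rcases hg with ⟨m', rfl, hvm, htag, hgm⟩ | ⟨m', rfl, hvm, htag, hgm⟩
      · refine ExpGood.steps (Relation.ReflTransGen.trans (steps_case2C hs)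
          (Relation.ReflTransGen.single (Step.case2R hvm))) ?_
        show ExpGood T ((msubstAt 1 γ b₁).subst0 m')
        rw [msubst_cons (show ClosedN 0 m' from hclW) henv.closedEnv]
        exact ih1 (m' :: γ) (List.Forall₂.cons ⟨hvm, show ClosedN 0 m' from hclW, hgm⟩ henv)
      · refine ExpGood.steps (Relation.ReflTransGen.trans (steps_case2C hs)
          (Relation.ReflTransGen.single (Step.case2R hvm))) ?_
        show ExpGood T ((msubstAt 1 γ b₂).subst0 m')
        rw [msubst_cons (show ClosedN 0 m' from hclW) henv.closedEnv]
        exact ih2 (m' :: γ) (List.Forall₂.cons ⟨hvm, show ClosedN 0 m' from hclW, hgm⟩ henv)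
    · exact Or.inr (Relation.ReflTransGen.trans (steps_case2C hmf)
        (Relation.ReflTransGen.single Step.mfCase2))
  | case1 hm hb ihm ihb =>
    rename_i Γ i m b T₁ T₂ T
    intro γ henv
    rw [msubst_case1 henv.closedEnv]
    rcases ihm γ henv with ⟨W, hs, hv, hg⟩ | hmf
    · have hclW : ClosedN 0 W := steps_closed hs (genv_msubst_closed henv hm)
      cases i
      · rcases hg with ⟨m', rfl, hvm, htag, hgm⟩ | ⟨m', rfl, hvm, htag, hgm⟩
        · exact absurd htag (by decide)
        · refine ExpGood.steps (Relation.ReflTransGen.trans (steps_case1C hs)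
            (Relation.ReflTransGen.single (Step.case1R hvm))) ?_
          rw [msubst_cons (show ClosedN 0 m' from hclW) henv.closedEnv]
          exact ihb (m' :: γ) (List.Forall₂.cons ⟨hvm, show ClosedN 0 m' from hclW, hgm⟩ henv)
      · rcases hg with ⟨m', rfl, hvm, htag, hgm⟩ | ⟨m', rfl, hvm, htag, hgm⟩
        · refine ExpGood.steps (Relation.ReflTransGen.trans (steps_case1C hs)
            (Relation.ReflTransGen.single (Step.case1R hvm))) ?_
          rw [msubst_cons (show ClosedN 0 m' from hclW) henv.closedEnv]
          exact ihb (m' :: γ) (List.Forall₂.cons ⟨hvm, show ClosedN 0 m' from hclW, hgm⟩ henv)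
        · exact absurd htag (by decide)
    · exact Or.inr (Relation.ReflTransGen.trans (steps_case1C hmf)
        (Relation.ReflTransGen.single Step.mfCase1))
  | cast hm ihm =>
    rename_i Γ φ₁ φ₂ m T₁ T₂
    intro γ henv
    rw [msubst_cast]
    rcases ihm γ henv with ⟨W, hsW, hv, hg⟩ | hmf
    · rcases hg with ⟨m', rfl, hvm, htag, hgm⟩ | ⟨m', rfl, hvm, htag, hgm⟩
      · by_cases h2 : tagOk true φ₂
        · refine ExpGood.steps (Relation.ReflTransGen.trans (steps_castC hsW)
            (Relation.ReflTransGen.single (Step.castOk hvm h2))) ?_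
          exact ExpGood.of_value (Value.inj _ _ hvm) (Or.inl ⟨m', rfl, hvm, h2, hgm⟩)
        · exact Or.inr (Relation.ReflTransGen.trans (steps_castC hsW)
            (Relation.ReflTransGen.single (Step.castFail hvm h2)))
      · by_cases h2 : tagOk false φ₂
        · refine ExpGood.steps (Relation.ReflTransGen.trans (steps_castC hsW)
            (Relation.ReflTransGen.single (Step.castOk hvm h2))) ?_
          exact ExpGood.of_value (Value.inj _ _ hvm) (Or.inr ⟨m', rfl, hvm, h2, hgm⟩)
        · exact Or.inr (Relation.ReflTransGen.trans (steps_castC hsW)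
            (Relation.ReflTransGen.single (Step.castFail hvm h2)))
    · exact Or.inr (Relation.ReflTransGen.trans (steps_castC hmf)
        (Relation.ReflTransGen.single Step.mfCast))
  | matchfail =>
    intro γ henv
    refine Or.inr ?_
    rw [msubst_matchfail]
    exact Relation.ReflTransGen.refl

end SN

/-- strong normalization — every well-typed closed target term
terminates in a value or in matchfail; divergence is impossible. -/
theorem target_strong_normalization {M : Tm} {T : TTy} (hty : Typed [] M T) :
    (∃ W, Steps M W ∧ Value W) ∨ Steps M .matchfail := by
  have h := SN.fund hty [] List.Forall₂.nil
  rcases h with ⟨W, hs, hv, _⟩ | hmf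
  · exact Or.inl ⟨W, hs, hv⟩
  · exact Or.inr hmf
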